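/- Let g₁, g₂ : ℝ → ℝ be continuous strictly increasing maps with gᵢ(x+1) = gᵢ(x) + 1 for all x (i = 1,2), and suppose g₁(x) < g₂(x) for all x ∈ ℝ; set α = inf_{x∈ℝ} (g₂(x) − g₁(x)) > 0. Let r₁, r₂ be the translation numbers of g₁, g₂. Suppose r₂ is irrational and p'/q' is a convergent of the continued fraction expansion of r₂ with p'/q' ≤ r₂ (a defect approximation) and q' > 1/α. Then r₁ ≤ p'/q' < r₂. -/

import Mathlib

open Filter Topology Set

/-- Integer-equivariance from the degree-one lift condition. -/
lemma lift_int_aux {g : ℝ → ℝ} (h : ∀ x, g (x + 1) = g x + 1) :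
    ∀ (m : ℤ) (x : ℝ), g (x + m) = g x + m := by
  intro m
  induction m using Int.induction_on with
  | zero => simp
  | succ k ih =>
      intro x
      have h1 : (x : ℝ) + (k + 1 : ℤ) = (x + (k : ℤ)) + 1 := by push_cast; ring
      rw [h1, h, ih x]; push_cast; ring
  | pred k ih =>
      intro x
      have key := h (x + (-(k:ℝ) - 1))
      have e1 : x + (-(k:ℝ) - 1) + 1 = x + -(k:ℝ) := by ring
      rw [e1] at key
      have ihx := ih x
      push_cast at ihx ⊢
      rw [ihx] at key
      linarith

/-- Iterates of a degree-one lift are degree-one lifts. -/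
lemma iterate_lift_aux {g : ℝ → ℝ} (h : ∀ x, g (x + 1) = g x + 1) (k : ℕ) :
    ∀ x, g^[k] (x + 1) = g^[k] x + 1 := by
  induction k with
  | zero => simp
  | succ k ih =>
      intro x
      rw [Function.iterate_succ_apply', Function.iterate_succ_apply', ih, h]

/-- The continuants of `of v` are integers when the expansion never terminates. -/
lemma contsAux_int_aux (v : ℝ) (hnt : ∀ m, ¬(GenContFract.of v).TerminatedAt m) :
    ∀ n : ℕ, (∃ a : ℤ, ((GenContFract.of v).contsAux n).a = a) ∧
             (∃ b : ℤ, ((GenContFract.of v).contsAux n).b = b) := by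
  intro n
  induction n using Nat.strong_induction_on with
  | _ n ih =>
    match n with
    | 0 => exact ⟨⟨1, by rw [GenContFract.zeroth_contAux_eq_one_zero]; norm_num⟩,
                  ⟨0, by rw [GenContFract.zeroth_contAux_eq_one_zero]; norm_num⟩⟩
    | 1 =>
        refine ⟨⟨⌊v⌋, ?_⟩, ⟨1, ?_⟩⟩ <;>
          rw [GenContFract.first_contAux_eq_h_one]
        · exact GenContFract.of_h_eq_floor
        · norm_num
    | (k + 2) =>
        obtain ⟨gp, hgp⟩ : ∃ gp, (GenContFract.of v).s.get? k = some gp :=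
          Option.ne_none_iff_exists'.1 (hnt k)
        have ha1 : gp.a = 1 :=
          (GenContFract.of_partNum_eq_one_and_exists_int_partDen_eq hgp).1
        obtain ⟨z, hz⟩ :=
          (GenContFract.of_partNum_eq_one_and_exists_int_partDen_eq hgp).2
        have hrec := GenContFract.contsAux_recurrence hgp rfl rfl
        obtain ⟨⟨a0, ha0⟩, ⟨b0, hb0⟩⟩ := ih k (by omega)
        obtain ⟨⟨a1, ha1'⟩, ⟨b1, hb1'⟩⟩ := ih (k + 1) (by omega)
        rw [hrec]
        constructor
        · exact ⟨z * a1 + a0, by rw [ha1, hz, ha0, ha1']; push_cast; ring⟩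
        · exact ⟨z * b1 + b0, by rw [ha1, hz, hb0, hb1']; push_cast; ring⟩

/-- **Lemma 1 c.** Let `g₁ < g₂` pointwise be degree-one lifts with
translation numbers `r₁, r₂`, and `α = inf (g₂ - g₁) > 0`. If `r₂` is irrational and
`p'/q'` is a defect continued-fraction convergent of `r₂` (i.e. `p'/q' ≤ r₂`) with
`q' > 1/α`, then `r₁ ≤ p'/q' < r₂`. -/
theorem poncelet_stmt6
    (g₁ g₂ : ℝ → ℝ)
    (hg₁c : Continuous g₁) (hg₂c : Continuous g₂)
    (hg₁m : StrictMono g₁) (hg₂m : StrictMono g₂)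
    (hg₁per : ∀ x : ℝ, g₁ (x + 1) = g₁ x + 1)
    (hg₂per : ∀ x : ℝ, g₂ (x + 1) = g₂ x + 1)
    (hlt : ∀ x : ℝ, g₁ x < g₂ x)
    (α : ℝ) (hα : α = ⨅ x : ℝ, (g₂ x - g₁ x))
    (r₁ r₂ : ℝ)
    (hr₁ : ∀ x : ℝ, Tendsto (fun k : ℕ => (g₁^[k] x - x) / k) atTop (nhds r₁))
    (hr₂ : ∀ x : ℝ, Tendsto (fun k : ℕ => (g₂^[k] x - x) / k) atTop (nhds r₂))
    (hirr : Irrational r₂)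
    (n : ℕ) (p' q' : ℝ)
    (hp' : p' = (GenContFract.of r₂).nums n)
    (hq' : q' = (GenContFract.of r₂).dens n)
    (hdefect : p' / q' ≤ r₂)
    (hq'big : 1 / α < q') :
    r₁ ≤ p' / q' ∧ p' / q' < r₂ := by
  -- the infimum is positive and is a lower bound
  have hfper : ∀ (m : ℤ) (x : ℝ), g₂ (x + m) - g₁ (x + m) = g₂ x - g₁ x := by
    intro m x
    rw [lift_int_aux hg₁per m x, lift_int_aux hg₂per m x]; ring
  obtain ⟨c, hcmem, hcmin⟩ :=
    isCompact_Icc.exists_isMinOn (nonempty_Icc.2 zero_le_one)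
      ((hg₂c.sub hg₁c).continuousOn (s := Icc (0:ℝ) 1))
  have hflb : ∀ x : ℝ, g₂ c - g₁ c ≤ g₂ x - g₁ x := by
    intro x
    have h1 : g₂ x - g₁ x = g₂ (Int.fract x) - g₁ (Int.fract x) := by
      have := hfper ⌊x⌋ (Int.fract x)
      rw [Int.fract_add_floor] at this
      exact this
    rw [h1]
    exact hcmin (mem_Icc.2 ⟨(Int.fract_nonneg x), le_of_lt (Int.fract_lt_one x)⟩)
  have hbdd : BddBelow (range fun x : ℝ => g₂ x - g₁ x) := by
    refine ⟨g₂ c - g₁ c, ?_⟩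
    rintro y ⟨x, rfl⟩
    exact hflb x
  have hαle : ∀ x : ℝ, α ≤ g₂ x - g₁ x := by
    intro x; rw [hα]; exact ciInf_le hbdd x
  have hαpos : 0 < α := by
    have h1 : g₂ c - g₁ c ≤ α := by
      rw [hα]; exact le_ciInf hflb
    have := hlt c
    linarith
  have hq'pos : 0 < q' := lt_trans (by positivity) hq'big
  -- never terminates
  have hnoterm : ∀ m, ¬(GenContFract.of r₂).TerminatedAt m := by
    intro m hm
    have ht : (GenContFract.of r₂).Terminates := ⟨m, hm⟩
    rw [GenContFract.terminates_iff_rat] at ht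
    obtain ⟨q, hq⟩ := ht
    exact hirr ⟨q, hq.symm⟩
  -- p', q' are integers
  obtain ⟨⟨mp, hmp⟩, ⟨mq, hmq⟩⟩ := contsAux_int_aux r₂ hnoterm (n + 1)
  have hp'int : p' = (mp : ℝ) := by
    rw [hp', GenContFract.num_eq_conts_a, GenContFract.nth_cont_eq_succ_nth_contAux, hmp]
  have hq'int : q' = (mq : ℝ) := by
    rw [hq', GenContFract.den_eq_conts_b, GenContFract.nth_cont_eq_succ_nth_contAux, hmq]
  -- strict inequality p'/q' < r₂
  have hne : p' / q' ≠ r₂ := by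
    intro h
    exact hirr ⟨(mp : ℚ) / (mq : ℚ), by rw [← h, hp'int, hq'int]; push_cast; ring⟩
  have hstrict : p' / q' < r₂ := lt_of_le_of_ne hdefect hne
  refine ⟨?_, hstrict⟩
  -- key approximation bound : q' * r₂ - p' < α
  have habs := GenContFract.abs_sub_convs_le (v := r₂) (n := n) (hnoterm n)
  have hconv : (GenContFract.of r₂).convs n = p' / q' := by
    rw [GenContFract.conv_eq_num_div_den, hp', hq']
  rw [hconv] at habs
  rw [← hq'] at habs
  have hdenmono : q' ≤ (GenContFract.of r₂).dens (n + 1) := by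
    rw [hq']; exact GenContFract.of_den_mono
  have hkey : q' * r₂ - p' < α := by
    have h2 : r₂ - p' / q' ≤ 1 / (q' * q') := by
      have h3 := (abs_le.1 habs).2
      have h4 : (0:ℝ) < q' * q' := by positivity
      have h5 : q' * q' ≤ q' * (GenContFract.of r₂).dens (n + 1) := by
        have := mul_le_mul_of_nonneg_left hdenmono (le_of_lt hq'pos)
        linarith
      have h6 : 1 / (q' * (GenContFract.of r₂).dens (n + 1)) ≤ 1 / (q' * q') :=
        one_div_le_one_div_of_le h4 h5
      linarith
    have h7 : 1 / q' < α := by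
      rw [div_lt_iff₀ hαpos] at hq'big
      rw [div_lt_iff₀ hq'pos, mul_comm]
      exact hq'big
    have h8 : q' * (r₂ - p' / q') ≤ q' * (1 / (q' * q')) :=
      mul_le_mul_of_nonneg_left h2 (le_of_lt hq'pos)
    have h9 : q' * (r₂ - p' / q') = q' * r₂ - p' := by
      field_simp
    have h10 : q' * (1 / (q' * q')) = 1 / q' := by
      field_simp
    rw [h9, h10] at h8
    linarith
  -- natural number N with (N : ℝ) = q'
  have hmqpos : 0 < mq := by
    by_contra h
    push_neg at h
    have : (mq : ℝ) ≤ 0 := by exact_mod_cast h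
    rw [hq'int] at hq'pos; linarith
  set N : ℕ := mq.toNat with hN
  have hNq : (N : ℝ) = q' := by
    rw [hq'int, hN]
    exact_mod_cast congrArg (Int.cast : ℤ → ℝ) (Int.toNat_of_nonneg (le_of_lt hmqpos))
  have hNpos : 0 < N := by
    by_contra h
    push_neg at h
    interval_cases N
    · rw [← hNq] at hq'pos; norm_num at hq'pos
  -- tendsto along the subsequence N * j
  have hNj : Tendsto (fun j : ℕ => N * j) atTop atTop := by
    apply tendsto_atTop_atTop.2
    intro b
    exact ⟨b, fun a ha => le_trans ha (Nat.le_mul_of_pos_left a hNpos)⟩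
  -- iterate comparison : g₁^[k+1] x + α ≤ g₂^[k+1] x
  have hcomp : ∀ (k : ℕ) (x : ℝ), g₁^[k + 1] x + α ≤ g₂^[k + 1] x := by
    intro k
    induction k with
    | zero => intro x; simp only [zero_add, Function.iterate_one]; linarith [hαle x]
    | succ k ih =>
        intro x
        rw [Function.iterate_succ_apply' g₁, Function.iterate_succ_apply' g₂]
        have h1 : g₁ (g₁^[k + 1] x) + α ≤ g₂ (g₁^[k + 1] x) := by
          have := hαle (g₁^[k + 1] x); linarith
        have h2 : g₂ (g₁^[k + 1] x) ≤ g₂ (g₂^[k + 1] x) :=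
          hg₂m.monotone (by linarith [ih x])
        linarith
  -- claim A : there is x₀ with g₂^[N] x₀ < x₀ + (p' + α)
  have hA : ∃ x₀ : ℝ, g₂^[N] x₀ < x₀ + (p' + α) := by
    by_contra hA
    push_neg at hA
    have hstep : ∀ (j : ℕ) (x : ℝ), x + j * (p' + α) ≤ g₂^[N * j] x := by
      intro j
      induction j with
      | zero => intro x; simp
      | succ j ih =>
          intro x
          have he : N * (j + 1) = N + N * j := by ring
          rw [he, Function.iterate_add_apply]
          have h1 := hA (g₂^[N * j] x)
          have h2 := ih x
          have h3 : x + (j : ℝ) * (p' + α) + (p' + α) ≤ g₂^[N * j] x + (p' + α) := by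
            linarith
          have h4 : x + ((j : ℕ) + 1 : ℕ) * (p' + α) = x + (j : ℝ) * (p' + α) + (p' + α) := by
            push_cast; ring
          rw [h4]
          linarith
    have hub : (p' + α) / q' ≤ r₂ := by
      have ht : Tendsto (fun j : ℕ => (g₂^[N * j] 0 - 0) / ((N * j : ℕ) : ℝ)) atTop (nhds r₂) :=
        (hr₂ 0).comp hNj
      refine ge_of_tendsto ht ?_
      filter_upwards [eventually_ge_atTop 1] with j hj
      have h1 := hstep j 0
      have hjpos : (0:ℝ) < (N * j : ℕ) := by
        have : 0 < N * j := Nat.mul_pos hNpos hj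
        exact_mod_cast this
      rw [div_le_div_iff₀ hq'pos hjpos]
      have h2 : (0:ℝ) + j * (p' + α) ≤ g₂^[N * j] 0 - 0 := by linarith
      have h3 : (p' + α) * ((N * j : ℕ) : ℝ) = (j * (p' + α)) * q' := by
        push_cast; rw [← hNq]; push_cast; ring
      rw [h3]
      have h4 : (j : ℝ) * (p' + α) ≤ g₂^[N * j] 0 - 0 := by linarith
      exact mul_le_mul_of_nonneg_right h4 (le_of_lt hq'pos)
    have : r₂ < (p' + α) / q' := by
      rw [lt_div_iff₀ hq'pos]
      linarith [mul_comm r₂ q']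
    linarith
  obtain ⟨x₀, hx₀⟩ := hA
  -- g₁^[N] x₀ < x₀ + p'
  have hg1N : g₁^[N] x₀ < x₀ + p' := by
    have h1 : g₁^[N] x₀ + α ≤ g₂^[N] x₀ := by
      have := hcomp (N - 1) x₀
      have hNe : N - 1 + 1 = N := by omega
      rwa [hNe] at this
    linarith
  -- integer-shift of iterates
  have hshift : ∀ (j : ℕ), g₁^[N] (x₀ + j * p') = g₁^[N] x₀ + j * p' := by
    intro j
    have h1 := lift_int_aux (iterate_lift_aux hg₁per N) ((j : ℤ) * mp) x₀
    have h2 : (((j : ℤ) * mp : ℤ) : ℝ) = (j : ℝ) * p' := by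
      rw [hp'int]; push_cast; ring
    rw [h2] at h1
    exact h1
  -- claim B : g₁^[N*j] x₀ ≤ x₀ + j * p'
  have hB : ∀ j : ℕ, g₁^[N * j] x₀ ≤ x₀ + j * p' := by
    intro j
    induction j with
    | zero => simp
    | succ j ih =>
        have he : N * (j + 1) = N + N * j := by ring
        rw [he, Function.iterate_add_apply]
        have h1 : g₁^[N] (g₁^[N * j] x₀) ≤ g₁^[N] (x₀ + j * p') :=
          (hg₁m.iterate N).monotone ih
        rw [hshift j] at h1
        have h2 : x₀ + ((j : ℕ) + 1 : ℕ) * p' = x₀ + p' + (j : ℝ) * p' := by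
          push_cast; ring
        rw [h2]
        linarith
  -- conclude r₁ ≤ p'/q'
  have ht : Tendsto (fun j : ℕ => (g₁^[N * j] x₀ - x₀) / ((N * j : ℕ) : ℝ)) atTop (nhds r₁) :=
    (hr₁ x₀).comp hNj
  refine le_of_tendsto ht ?_
  filter_upwards [eventually_ge_atTop 1] with j hj
  have hjpos : (0:ℝ) < (N * j : ℕ) := by
    have : 0 < N * j := Nat.mul_pos hNpos hj
    exact_mod_cast this
  rw [div_le_div_iff₀ hjpos hq'pos]
  have h1 := hB j
  have h2 : (g₁^[N * j] x₀ - x₀) ≤ j * p' := by linarith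
  have h3 : p' * ((N * j : ℕ) : ℝ) = (j * p') * q' := by
    push_cast; rw [← hNq]; push_cast; ring
  rw [h3]
  exact mul_le_mul_of_nonneg_right h2 (le_of_lt hq'pos)
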